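/- For η : ℂ → M_n(ℂ) holomorphic on an open neighborhood of the closed unit disk, the contour integral of tr(η(z)* η'(z)) over the unit circle equals 2i times the area integral of tr(η'(z)* η'(z)) over the open unit disk: ∮_{|z|=1} tr(η(z)* η'(z)) dz = 2i ∫_{{z : |z| < 1}} tr(η'(z)* η'(z)) dA(z), where dA is two-dimensional Lebesgue measure. In particular the contour integral is 2i times a nonnegative real number. -/

import Mathlib

attribute [local instance] Matrix.normedAddCommGroup Matrix.normedSpace

open Matrix Metric Real MeasureTheory

open Set

noncomputable section

section Scalar
variable (U : Set ℂ) (f : ℂ → ℂ)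

-- components
def Efn (θ : ℝ) : ℂ := Complex.exp (θ * Complex.I)
def Phi (p : ℝ × ℝ) : ℂ := (p.2 : ℂ) * Efn p.1
def Gf (f : ℂ → ℂ) (z : ℂ) : ℂ := (starRingEnd ℂ) (f z) * deriv f z
def Hf (f : ℂ → ℂ) (z : ℂ) : ℂ := (starRingEnd ℂ) (deriv f z) * deriv f z
def Kf (f : ℂ → ℂ) (z : ℂ) : ℂ := (starRingEnd ℂ) (f z) * deriv (deriv f) z

def Pf (f : ℂ → ℂ) (p : ℝ × ℝ) : ℂ := -(Gf f (Phi p) * Efn p.1)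
def Qf (f : ℂ → ℂ) (p : ℝ × ℝ) : ℂ :=
  Gf f (Phi p) * (Complex.I * (p.2 : ℂ) * Efn p.1)

def Af (f : ℂ → ℂ) (p : ℝ × ℝ) : ℂ :=
  Hf f (Phi p) * (starRingEnd ℂ) (Complex.I * (p.2 : ℂ) * Efn p.1)
    + Kf f (Phi p) * (Complex.I * (p.2 : ℂ) * Efn p.1)
def Bf (f : ℂ → ℂ) (p : ℝ × ℝ) : ℂ :=
  Hf f (Phi p) * (starRingEnd ℂ) (Efn p.1) + Kf f (Phi p) * Efn p.1

def Pf' (f : ℂ → ℂ) (p : ℝ × ℝ) : ℝ × ℝ →L[ℝ] ℂ :=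
  (ContinuousLinearMap.fst ℝ ℝ ℝ).smulRight
      (-(Af f p * Efn p.1 + Gf f (Phi p) * (Complex.I * Efn p.1)))
    + (ContinuousLinearMap.snd ℝ ℝ ℝ).smulRight (-(Bf f p * Efn p.1))
def Qf' (f : ℂ → ℂ) (p : ℝ × ℝ) : ℝ × ℝ →L[ℝ] ℂ :=
  (ContinuousLinearMap.fst ℝ ℝ ℝ).smulRight
      (Af f p * (Complex.I * (p.2 : ℂ) * Efn p.1)
        + Gf f (Phi p) * (Complex.I * (Complex.I * (p.2 : ℂ) * Efn p.1)))
    + (ContinuousLinearMap.snd ℝ ℝ ℝ).smulRight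
      (Bf f p * (Complex.I * (p.2 : ℂ) * Efn p.1) + Gf f (Phi p) * (Complex.I * Efn p.1))

lemma hasDerivAt_E (θ : ℝ) :
    HasDerivAt (fun t : ℝ => Complex.exp (t * Complex.I))
      (Complex.I * Complex.exp (θ * Complex.I)) θ := by
  have h : HasDerivAt (fun w : ℂ => Complex.exp (w * Complex.I))
      (Complex.exp ((θ : ℂ) * Complex.I) * (1 * Complex.I)) (θ : ℂ) :=
    ((hasDerivAt_id ((θ : ℝ) : ℂ)).mul_const Complex.I).cexp
  have := h.comp_ofReal
  simpa [mul_comm] using this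

lemma hasFDerivAt_Phi (p : ℝ × ℝ) :
    HasFDerivAt Phi
      ((ContinuousLinearMap.fst ℝ ℝ ℝ).smulRight
          (Complex.I * (p.2 : ℂ) * Efn p.1)
        + (ContinuousLinearMap.snd ℝ ℝ ℝ).smulRight (Efn p.1)) p := by
  have h1 : HasFDerivAt (fun q : ℝ × ℝ => ((q.2 : ℝ) : ℂ))
      (Complex.ofRealCLM.comp (ContinuousLinearMap.snd ℝ ℝ ℝ)) p :=
    (Complex.ofRealCLM.hasFDerivAt).comp p hasFDerivAt_snd
  have h2 : HasFDerivAt (fun q : ℝ × ℝ => Complex.exp (q.1 * Complex.I))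
      ((ContinuousLinearMap.smulRight (1 : ℝ →L[ℝ] ℝ)
          (Complex.I * Complex.exp (p.1 * Complex.I))).comp (ContinuousLinearMap.fst ℝ ℝ ℝ)) p :=
    ((hasDerivAt_E p.1).hasFDerivAt).comp p hasFDerivAt_fst
  have := h1.mul h2
  refine this.congr_fderiv ?_
  apply ContinuousLinearMap.ext
  intro w
  simp [Efn, Phi, ContinuousLinearMap.smul_apply, smul_eq_mul]
  ring

lemma hasFDerivAt_Efst (p : ℝ × ℝ) :
    HasFDerivAt (fun q : ℝ × ℝ => Efn q.1)
      ((ContinuousLinearMap.smulRight (1 : ℝ →L[ℝ] ℝ)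
          (Complex.I * Efn p.1)).comp (ContinuousLinearMap.fst ℝ ℝ ℝ)) p :=
  ((hasDerivAt_E p.1).hasFDerivAt).comp p hasFDerivAt_fst

/-- The Wirtinger-type derivative of `conj (f z) * deriv f z`. -/
lemma key_fderiv (hU : IsOpen U) (hf : DifferentiableOn ℂ f U) (hf1 : DifferentiableOn ℂ (deriv f) U)
    {z : ℂ} (hz : z ∈ U) :
    HasFDerivAt (Gf f)
      ((Hf f z) • (Complex.conjCLE.toContinuousLinearMap : ℂ →L[ℝ] ℂ)
        + (Kf f z) • (ContinuousLinearMap.id ℝ ℂ)) z := by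
  have h1 : HasFDerivAt f ((ContinuousLinearMap.smulRight (1 : ℂ →L[ℂ] ℂ) (deriv f z)).restrictScalars ℝ) z :=
    ((hf.differentiableAt (hU.mem_nhds hz)).hasDerivAt).hasFDerivAt.restrictScalars ℝ
  have h2 : HasFDerivAt (deriv f)
      ((ContinuousLinearMap.smulRight (1 : ℂ →L[ℂ] ℂ) (deriv (deriv f) z)).restrictScalars ℝ) z :=
    ((hf1.differentiableAt (hU.mem_nhds hz)).hasDerivAt).hasFDerivAt.restrictScalars ℝ
  have hc : HasFDerivAt (fun w => (starRingEnd ℂ) (f w))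
      ((Complex.conjCLE.toContinuousLinearMap : ℂ →L[ℝ] ℂ).comp
        ((ContinuousLinearMap.smulRight (1 : ℂ →L[ℂ] ℂ) (deriv f z)).restrictScalars ℝ)) z := by
    have := (Complex.conjCLE.toContinuousLinearMap.hasFDerivAt (x := f z)).comp z h1
    exact this
  have := hc.mul h2
  refine this.congr_fderiv ?_
  apply ContinuousLinearMap.ext
  intro w
  simp [Hf, Kf, ContinuousLinearMap.smul_apply, smul_eq_mul]
  ring

lemma hasFDerivAt_P (hU : IsOpen U) (hf : DifferentiableOn ℂ f U) (hf1 : DifferentiableOn ℂ (deriv f) U)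
    {p : ℝ × ℝ} (hp : Phi p ∈ U) :
    HasFDerivAt (Pf f) (Pf' f p) p := by
  have hGΦ := (key_fderiv U f hU hf hf1 hp).comp p (hasFDerivAt_Phi p)
  have := (hGΦ.mul (hasFDerivAt_Efst p)).neg
  refine this.congr_fderiv ?_
  apply ContinuousLinearMap.ext
  intro w
  simp [Pf', Af, Bf, ContinuousLinearMap.smul_apply, smul_eq_mul, Complex.real_smul,
    map_add, _root_.map_mul, Complex.conj_ofReal, Complex.conj_I]
  ring

lemma hasFDerivAt_Q (hU : IsOpen U) (hf : DifferentiableOn ℂ f U) (hf1 : DifferentiableOn ℂ (deriv f) U)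
    {p : ℝ × ℝ} (hp : Phi p ∈ U) :
    HasFDerivAt (Qf f) (Qf' f p) p := by
  have hGΦ := (key_fderiv U f hU hf hf1 hp).comp p (hasFDerivAt_Phi p)
  have hIρE : HasFDerivAt (fun q : ℝ × ℝ => Complex.I * (q.2 : ℂ) * Efn q.1)
      ((ContinuousLinearMap.fst ℝ ℝ ℝ).smulRight
          (Complex.I * (Complex.I * (p.2 : ℂ) * Efn p.1))
        + (ContinuousLinearMap.snd ℝ ℝ ℝ).smulRight (Complex.I * Efn p.1)) p := by
    have heq : (fun q : ℝ × ℝ => Complex.I * (q.2 : ℂ) * Efn q.1)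
        = fun q => Complex.I * Phi q := by
      funext q; simp [Phi]; ring
    rw [heq]
    have := (hasFDerivAt_Phi p).const_mul Complex.I
    refine this.congr_fderiv ?_
    apply ContinuousLinearMap.ext
    intro w
    simp [ContinuousLinearMap.smul_apply, smul_eq_mul]
    ring
  have := hGΦ.mul hIρE
  refine this.congr_fderiv ?_
  apply ContinuousLinearMap.ext
  intro w
  simp [Qf', Af, Bf, ContinuousLinearMap.smul_apply, smul_eq_mul, Complex.real_smul,
    map_add, _root_.map_mul, Complex.conj_ofReal, Complex.conj_I]
  ring

end Scalar

section Scalar2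
variable (U : Set ℂ) (f : ℂ → ℂ)

lemma conjE_mul_E (θ : ℝ) : (starRingEnd ℂ) (Efn θ) * Efn θ = 1 := by
  rw [mul_comm, Complex.mul_conj]
  simp [Efn, Complex.normSq_eq_norm_sq, Complex.norm_exp_ofReal_mul_I]

lemma div_eval (p : ℝ × ℝ) :
    Pf' f p (1, 0) + Qf' f p (0, 1) = 2 * Complex.I * (p.2 : ℂ) * Hf f (Phi p) := by
  have h := conjE_mul_E p.1
  simp only [Pf', Qf', Af, Bf, ContinuousLinearMap.add_apply,
    ContinuousLinearMap.smulRight_apply, ContinuousLinearMap.coe_fst',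
    ContinuousLinearMap.coe_snd', one_smul, zero_smul, add_zero, zero_add,
    _root_.map_mul, Complex.conj_ofReal, Complex.conj_I]
  linear_combination (2 * Complex.I * (p.2 : ℂ) * Hf f (Phi p)) * h

lemma continuous_Efn : Continuous Efn :=
  Complex.continuous_exp.comp (Complex.continuous_ofReal.mul continuous_const)

lemma continuous_Phi : Continuous Phi :=
  (Complex.continuous_ofReal.comp continuous_snd).mul (continuous_Efn.comp continuous_fst)

lemma abs_Phi (p : ℝ × ℝ) : ‖Phi p‖ = |p.2| := by
  simp [Phi, Efn, Complex.norm_exp_ofReal_mul_I]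

end Scalar2

lemma scalar_green (U : Set ℂ) (hU : IsOpen U) (hU1 : closedBall (0:ℂ) 1 ⊆ U)
    (f : ℂ → ℂ) (hf : DifferentiableOn ℂ f U) :
    (∫ θ in (0:ℝ)..(2*π),
        (starRingEnd ℂ) (f (Complex.exp (θ * Complex.I))) * deriv f (Complex.exp (θ * Complex.I)) *
          (Complex.I * Complex.exp (θ * Complex.I))) =
      2 * Complex.I * ∫ z in ball (0:ℂ) 1, (starRingEnd ℂ) (deriv f z) * deriv f z := by
  have hA : AnalyticOnNhd ℂ f U := hf.analyticOnNhd hU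
  have hf1 : DifferentiableOn ℂ (deriv f) U := hA.deriv.differentiableOn
  have hcf : ContinuousOn f U := hf.continuousOn
  have hcf1 : ContinuousOn (deriv f) U := hf1.continuousOn
  have hcf2 : ContinuousOn (deriv (deriv f)) U := hA.deriv.deriv.differentiableOn.continuousOn
  have hGc : ContinuousOn (Gf f) U := (continuous_star.comp_continuousOn hcf).mul hcf1
  have hHcU : ContinuousOn (Hf f) U := (continuous_star.comp_continuousOn hcf1).mul hcf1
  have hmem : ∀ p : ℝ × ℝ, |p.2| ≤ 1 → Phi p ∈ U := by
    intro p hp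
    apply hU1
    simp only [Metric.mem_closedBall, dist_zero_right, abs_Phi]
    exact hp
  -- continuity of P, Q on the rectangle
  have hsub : MapsTo Phi (uIcc (-π) π ×ˢ uIcc (0:ℝ) 1) U := by
    intro p hp
    apply hmem
    have h2 : p.2 ∈ uIcc (0:ℝ) 1 := hp.2
    rw [uIcc_of_le zero_le_one] at h2
    rw [abs_le]; exact ⟨by linarith [h2.1], h2.2⟩
  have hGΦc : ContinuousOn (fun p : ℝ × ℝ => Gf f (Phi p)) (uIcc (-π) π ×ˢ uIcc (0:ℝ) 1) :=
    hGc.comp continuous_Phi.continuousOn hsub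
  have HcP : ContinuousOn (Pf f) (uIcc (-π) π ×ˢ uIcc (0:ℝ) 1) :=
    (hGΦc.mul (continuous_Efn.comp continuous_fst).continuousOn).neg
  have HcQ : ContinuousOn (Qf f) (uIcc (-π) π ×ˢ uIcc (0:ℝ) 1) :=
    hGΦc.mul ((continuous_const.mul (Complex.continuous_ofReal.comp continuous_snd)).mul
      (continuous_Efn.comp continuous_fst)).continuousOn
  have hmemIoo : ∀ p : ℝ × ℝ,
      p ∈ (Ioo (min (-π) π) (max (-π) π) ×ˢ Ioo (min (0:ℝ) 1) (max (0:ℝ) 1)) \ (∅ : Set (ℝ×ℝ)) →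
      Phi p ∈ U := by
    rintro p ⟨⟨-, h2⟩, -⟩
    rw [min_eq_left zero_le_one, max_eq_right zero_le_one] at h2
    exact hmem p (abs_le.2 ⟨by linarith [h2.1], le_of_lt h2.2⟩)
  have HdP : ∀ p ∈ (Ioo (min (-π) π) (max (-π) π) ×ˢ Ioo (min (0:ℝ) 1) (max (0:ℝ) 1)) \ (∅ : Set (ℝ×ℝ)),
      HasFDerivAt (Pf f) (Pf' f p) p := fun p hp =>
    hasFDerivAt_P U f hU hf hf1 (hmemIoo p hp)
  have HdQ : ∀ p ∈ (Ioo (min (-π) π) (max (-π) π) ×ˢ Ioo (min (0:ℝ) 1) (max (0:ℝ) 1)) \ (∅ : Set (ℝ×ℝ)),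
      HasFDerivAt (Qf f) (Qf' f p) p := fun p hp =>
    hasFDerivAt_Q U f hU hf hf1 (hmemIoo p hp)
  have Hi : IntegrableOn (fun p : ℝ × ℝ => Pf' f p (1, 0) + Qf' f p (0, 1))
      (uIcc (-π) π ×ˢ uIcc (0:ℝ) 1) := by
    have : (fun p : ℝ × ℝ => Pf' f p (1, 0) + Qf' f p (0, 1))
        = fun p => 2 * Complex.I * (p.2 : ℂ) * Hf f (Phi p) := funext fun p => div_eval f p
    rw [this]
    exact ((((continuous_const.mul
        (Complex.continuous_ofReal.comp continuous_snd)).continuousOn).mul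
        (((continuous_star.comp_continuousOn hcf1).mul hcf1).comp
          continuous_Phi.continuousOn hsub)).integrableOn_compact
      (isCompact_uIcc.prod isCompact_uIcc))
  have key := integral2_divergence_prod_of_hasFDerivAt_off_countable
    (Pf f) (Qf f) (Pf' f) (Qf' f) (-π) 0 π 1 ∅ countable_empty HcP HcQ HdP HdQ Hi
  -- boundary simplifications
  have hEpi : Efn π = -1 := Complex.exp_pi_mul_I
  have hEmpi : Efn (-π) = -1 := by
    rw [Efn, Complex.ofReal_neg, neg_mul, Complex.exp_neg, Complex.exp_pi_mul_I]
    norm_num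
  have hQ0 : ∀ x : ℝ, Qf f (x, 0) = 0 := by intro x; simp [Qf]
  have hPside : ∀ y : ℝ, Pf f (π, y) = Pf f (-π, y) := by
    intro y; simp [Pf, Phi, hEpi, hEmpi]
  have hQ1 : ∀ x : ℝ, Qf f (x, 1)
      = (starRingEnd ℂ) (f (Complex.exp (x * Complex.I))) * deriv f (Complex.exp (x * Complex.I)) *
          (Complex.I * Complex.exp (x * Complex.I)) := by
    intro x
    simp only [Qf, Gf, Phi, Efn, Complex.ofReal_one, one_mul, mul_one]
  -- periodicity
  have hper : Function.Periodic (fun θ : ℝ =>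
      (starRingEnd ℂ) (f (Complex.exp (θ * Complex.I))) * deriv f (Complex.exp (θ * Complex.I)) *
        (Complex.I * Complex.exp (θ * Complex.I))) (2*π) := by
    intro θ
    have hexp : Complex.exp (((θ + 2*π : ℝ) : ℂ) * Complex.I) = Complex.exp ((θ:ℝ) * Complex.I) := by
      push_cast
      rw [add_mul, Complex.exp_add, Complex.exp_two_pi_mul_I, mul_one]
    simp only [hexp]
  have hshift : (∫ θ in (0:ℝ)..(2*π),
      (starRingEnd ℂ) (f (Complex.exp (θ * Complex.I))) * deriv f (Complex.exp (θ * Complex.I)) *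
        (Complex.I * Complex.exp (θ * Complex.I)))
      = ∫ θ in (-π)..π,
      (starRingEnd ℂ) (f (Complex.exp (θ * Complex.I))) * deriv f (Complex.exp (θ * Complex.I)) *
        (Complex.I * Complex.exp (θ * Complex.I)) := by
    have h2 := hper.intervalIntegral_add_eq 0 (-π)
    rw [zero_add, show -π + 2*π = π by ring] at h2
    exact h2
  have hLHSdiv : (∫ x in (-π)..π, ∫ y in (0:ℝ)..1, Pf' f (x,y) (1,0) + Qf' f (x,y) (0,1))
      = 2*Complex.I * ∫ x in (-π)..π, ∫ y in (0:ℝ)..1, (y:ℂ) * Hf f (Phi (x,y)) := by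
    rw [← intervalIntegral.integral_const_mul]
    apply intervalIntegral.integral_congr
    intro x _
    have : ∀ y : ℝ, Pf' f (x,y) (1,0) + Qf' f (x,y) (0,1)
        = 2*Complex.I * ((y:ℂ) * Hf f (Phi (x,y))) := by
      intro y
      rw [div_eval f (x,y)]
      ring
    simp only [this]
    exact intervalIntegral.integral_const_mul _ _
  -- polar coordinates
  set W : ℝ × ℝ → ℂ := fun q => (q.1:ℂ) * Hf f ((q.1:ℂ) * Efn q.2) with hWdef
  have hWcont : ContinuousOn W (Icc (0:ℝ) 1 ×ˢ Icc (-π) π) := by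
    apply ContinuousOn.mul
    · exact (Complex.continuous_ofReal.comp continuous_fst).continuousOn
    · apply hHcU.comp
      · exact ((Complex.continuous_ofReal.comp continuous_fst).mul
          (continuous_Efn.comp continuous_snd)).continuousOn
      · intro q hq
        exact hmem (q.2, q.1) (by rw [abs_le]; exact ⟨by linarith [hq.1.1], hq.1.2⟩)
  have hWint : IntegrableOn W (Ioo (0:ℝ) 1 ×ˢ Ioo (-π) π) :=
    (hWcont.integrableOn_compact (isCompact_Icc.prod isCompact_Icc)).mono_set
      (prod_mono Ioo_subset_Icc_self Ioo_subset_Icc_self)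
  have h1 : ∫ z in ball (0:ℂ) 1, Hf f z = ∫ q in Ioo (0:ℝ) 1 ×ˢ Ioo (-π) π, W q := by
    rw [← integral_indicator measurableSet_ball]
    rw [← Complex.integral_comp_polarCoord_symm (fun z => (ball (0:ℂ) 1).indicator (Hf f) z)]
    rw [polarCoord_target]
    have hEq : EqOn
        (fun p : ℝ × ℝ => p.1 • (ball (0:ℂ) 1).indicator (Hf f) (Complex.polarCoord.symm p))
        ((Ioo (0:ℝ) 1 ×ˢ Ioo (-π) π).indicator W) (Ioi (0:ℝ) ×ˢ Ioo (-π) π) := by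
      rintro p ⟨hp1, hp2⟩
      have hsymm : (Complex.polarCoord.symm p : ℂ) = (p.1:ℂ) * Efn p.2 := by
        rw [Complex.polarCoord_symm_apply, Efn, Complex.exp_mul_I]
        rw [Complex.ofReal_cos, Complex.ofReal_sin]
      have habs : ‖(p.1:ℂ) * Efn p.2‖ = |p.1| := by
        simp [Efn, Complex.norm_exp_ofReal_mul_I]
      simp only [hsymm]
      by_cases hlt : p.1 < 1
      · have hball : (p.1:ℂ) * Efn p.2 ∈ ball (0:ℂ) 1 := by
          rw [mem_ball, dist_zero_right, habs, abs_of_pos hp1]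
          exact hlt
        rw [indicator_of_mem hball,
          indicator_of_mem (show p ∈ Ioo (0:ℝ) 1 ×ˢ Ioo (-π) π from ⟨⟨hp1, hlt⟩, hp2⟩)]
        simp only [hWdef, Complex.real_smul]
      · have hnball : (p.1:ℂ) * Efn p.2 ∉ ball (0:ℂ) 1 := by
          rw [mem_ball, dist_zero_right, habs, abs_of_pos hp1]
          exact fun h => hlt h
        rw [indicator_of_notMem hnball, indicator_of_notMem (fun h => hlt h.1.2)]
        simp
    rw [setIntegral_congr_fun ((isOpen_Ioi.prod isOpen_Ioo).measurableSet) hEq]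
    rw [setIntegral_indicator (measurableSet_Ioo.prod measurableSet_Ioo)]
    rw [inter_eq_right.2 (prod_mono Ioo_subset_Ioi_self (subset_refl _))]
  have h2 : ∫ q in Ioo (0:ℝ) 1 ×ˢ Ioo (-π) π, W q
      = ∫ x in Ioo (-π) π, ∫ y in Ioo (0:ℝ) 1, W (y, x) := by
    rw [Measure.volume_eq_prod]
    rw [setIntegral_prod W (by rwa [← Measure.volume_eq_prod])]
    apply integral_integral_swap
    rw [Measure.prod_restrict, ← Measure.volume_eq_prod]
    exact hWint
  have h3 : (∫ x in (-π)..π, ∫ y in (0:ℝ)..1, (y:ℂ) * Hf f (Phi (x,y)))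
      = ∫ x in Ioo (-π) π, ∫ y in Ioo (0:ℝ) 1, W (y, x) := by
    rw [intervalIntegral.integral_of_le (by linarith [Real.pi_pos] : (-π) ≤ π)]
    rw [← setIntegral_congr_set Ioo_ae_eq_Ioc]
    apply setIntegral_congr_fun measurableSet_Ioo
    intro x _
    dsimp only
    rw [intervalIntegral.integral_of_le zero_le_one]
    rw [← setIntegral_congr_set Ioo_ae_eq_Ioc]
    apply setIntegral_congr_fun measurableSet_Ioo
    intro y _
    simp only [hWdef, Phi]
  -- assembly
  have e1 : (∫ x in (-π)..π, Qf f (x,1))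
      = ∫ θ in (-π)..π,
        (starRingEnd ℂ) (f (Complex.exp (θ * Complex.I))) * deriv f (Complex.exp (θ * Complex.I)) *
          (Complex.I * Complex.exp (θ * Complex.I)) :=
    intervalIntegral.integral_congr (fun x _ => hQ1 x)
  have e2 : (∫ x in (-π)..π, Qf f (x,0)) = 0 := by
    have : ∀ x : ℝ, Qf f (x,0) = 0 := hQ0
    simp only [this, intervalIntegral.integral_zero]
  have e3 : (∫ y in (0:ℝ)..1, Pf f (π,y)) = ∫ y in (0:ℝ)..1, Pf f (-π,y) :=
    intervalIntegral.integral_congr (fun y _ => hPside y)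
  rw [hshift, ← e1]
  have hbd : (∫ x in (-π)..π, Qf f (x,1))
      = ∫ x in (-π)..π, ∫ y in (0:ℝ)..1, Pf' f (x,y) (1,0) + Qf' f (x,y) (0,1) := by
    rw [key, e2, e3]
    ring
  rw [hbd, hLHSdiv, h3, ← h2, ← h1]
  rfl

attribute [local instance] Matrix.normedAddCommGroup Matrix.normedSpace

open Matrix

def entryCLM (n : ℕ) (i j : Fin n) : Matrix (Fin n) (Fin n) ℂ →L[ℂ] ℂ :=
  LinearMap.toContinuousLinearMap
    { toFun := fun M => M i j, map_add' := fun _ _ => rfl, map_smul' := fun _ _ => rfl }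

/-- For `η` holomorphic near the closed unit disk, the contour integral of
`tr(η* η')` over the unit circle equals `2i` times the area integral of `tr(η'* η')` over
the open unit disk, hence equals `2i` times a nonnegative real number.  This is the
Stokes-theorem identity identifying the instanton charge with the degree. -/
theorem contour_integral_eq_energy
    {n : ℕ} (hn : 1 ≤ n) (U : Set ℂ) (hU : IsOpen U)
    (hU1 : closedBall (0 : ℂ) 1 ⊆ U)
    (η : ℂ → Matrix (Fin n) (Fin n) ℂ)
    (hhol : DifferentiableOn ℂ η U) :
    (∫ θ in (0:ℝ)..(2 * π),
        Matrix.trace ((η (Complex.exp (θ * Complex.I)))ᴴ * deriv η (Complex.exp (θ * Complex.I))) *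
          (Complex.I * Complex.exp (θ * Complex.I))) =
      2 * Complex.I * ∫ z in ball (0 : ℂ) 1, Matrix.trace ((deriv η z)ᴴ * deriv η z) ∧
    ∃ r : ℝ, 0 ≤ r ∧
      (∫ θ in (0:ℝ)..(2 * π),
        Matrix.trace ((η (Complex.exp (θ * Complex.I)))ᴴ * deriv η (Complex.exp (θ * Complex.I))) *
          (Complex.I * Complex.exp (θ * Complex.I))) = 2 * Complex.I * (r : ℂ) := by
  classical
  have hηd : ∀ z ∈ U, HasDerivAt η (deriv η z) z := fun z hz =>
    (hhol.differentiableAt (hU.mem_nhds hz)).hasDerivAt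
  have hent : ∀ (i j : Fin n), ∀ z ∈ U, HasDerivAt (fun w => η w i j) (deriv η z i j) z := by
    intro i j z hz
    exact (entryCLM n i j).hasFDerivAt.comp_hasDerivAt z (hηd z hz)
  set g : Fin n × Fin n → ℂ → ℂ := fun p z => η z p.1 p.2 with hg
  have hFdiff : ∀ p : Fin n × Fin n, DifferentiableOn ℂ (g p) U := fun p z hz =>
    ((hent p.1 p.2 z hz).differentiableAt).differentiableWithinAt
  have hFderiv : ∀ (p : Fin n × Fin n), ∀ z ∈ U, deriv (g p) z = deriv η z p.1 p.2 :=
    fun p z hz => (hent p.1 p.2 z hz).deriv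
  have htr : ∀ (A B : Matrix (Fin n) (Fin n) ℂ),
      Matrix.trace (Aᴴ * B) = ∑ p : Fin n × Fin n, (starRingEnd ℂ) (A p.1 p.2) * B p.1 p.2 := by
    intro A B
    rw [Fintype.sum_prod_type, Matrix.trace]
    simp only [Matrix.diag_apply, Matrix.mul_apply, Matrix.conjTranspose_apply]
    exact Finset.sum_comm
  have hEmem : ∀ θ : ℝ, Complex.exp ((θ:ℂ) * Complex.I) ∈ U := fun θ =>
    hU1 (by simp [Metric.mem_closedBall, dist_zero_right,
      Complex.norm_exp_ofReal_mul_I])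
  have hgc : ∀ p, ContinuousOn (g p) U := fun p => (hFdiff p).continuousOn
  have hgc1 : ∀ p, ContinuousOn (deriv (g p)) U := fun p =>
    ((hFdiff p).analyticOnNhd hU).deriv.differentiableOn.continuousOn
  have hcontour : (∫ θ in (0:ℝ)..(2 * π),
        Matrix.trace ((η (Complex.exp (θ * Complex.I)))ᴴ * deriv η (Complex.exp (θ * Complex.I))) *
          (Complex.I * Complex.exp (θ * Complex.I)))
      = ∑ p : Fin n × Fin n, ∫ θ in (0:ℝ)..(2*π),
          (starRingEnd ℂ) (g p (Complex.exp (θ * Complex.I))) *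
            deriv (g p) (Complex.exp (θ * Complex.I)) *
            (Complex.I * Complex.exp (θ * Complex.I)) := by
    rw [← intervalIntegral.integral_finset_sum]
    · apply intervalIntegral.integral_congr
      intro θ _
      dsimp only
      rw [htr, Finset.sum_mul]
      apply Finset.sum_congr rfl
      intro p _
      rw [hFderiv p _ (hEmem θ)]
    · intro p _
      apply Continuous.intervalIntegrable
      exact (((continuous_star.comp ((hgc p).comp_continuous continuous_Efn hEmem)).mul
        ((hgc1 p).comp_continuous continuous_Efn hEmem)).mul
        (continuous_const.mul continuous_Efn))
  have hball : (∫ z in ball (0:ℂ) 1, Matrix.trace ((deriv η z)ᴴ * deriv η z))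
      = ∑ p : Fin n × Fin n, ∫ z in ball (0:ℂ) 1,
          (starRingEnd ℂ) (deriv (g p) z) * deriv (g p) z := by
    rw [← integral_finset_sum]
    · apply setIntegral_congr_fun measurableSet_ball
      intro z hz
      have hzU : z ∈ U := hU1 (ball_subset_closedBall hz)
      dsimp only
      rw [htr]
      apply Finset.sum_congr rfl
      intro p _
      rw [hFderiv p z hzU]
    · intro p _
      exact (((continuous_star.comp_continuousOn ((hgc1 p).mono hU1)).mul
        ((hgc1 p).mono hU1)).integrableOn_compact (isCompact_closedBall 0 1)).mono_set
        ball_subset_closedBall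
  have main : (∫ θ in (0:ℝ)..(2 * π),
        Matrix.trace ((η (Complex.exp (θ * Complex.I)))ᴴ * deriv η (Complex.exp (θ * Complex.I))) *
          (Complex.I * Complex.exp (θ * Complex.I)))
      = 2 * Complex.I * ∫ z in ball (0 : ℂ) 1, Matrix.trace ((deriv η z)ᴴ * deriv η z) := by
    rw [hcontour, hball]
    rw [Finset.mul_sum]
    apply Finset.sum_congr rfl
    intro p _
    exact scalar_green U hU hU1 (g p) (hFdiff p)
  refine ⟨main, ?_⟩
  set r : ℝ := ∫ z in ball (0:ℂ) 1, ∑ p : Fin n × Fin n, Complex.normSq (deriv η z p.1 p.2) with hr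
  have hr0 : 0 ≤ r := setIntegral_nonneg measurableSet_ball
    (fun z _ => Finset.sum_nonneg fun p _ => Complex.normSq_nonneg _)
  refine ⟨r, hr0, ?_⟩
  rw [main]
  congr 1
  have hptwise : ∀ z : ℂ, Matrix.trace ((deriv η z)ᴴ * deriv η z)
      = ((∑ p : Fin n × Fin n, Complex.normSq (deriv η z p.1 p.2) : ℝ) : ℂ) := by
    intro z
    rw [htr]
    push_cast
    apply Finset.sum_congr rfl
    intro p _
    rw [mul_comm, Complex.mul_conj]
  rw [setIntegral_congr_fun measurableSet_ball (fun z _ => hptwise z)]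
  rw [hr]
  exact integral_ofReal
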